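/- arXiv:math/0203103 — 7 statements merged into one kernel-verified Lean document; each statement's English description precedes it below -/
import Mathlib

section
/- Let φ : ℝ² → ℝ be continuous with compact support contained in the open set {(x,y) ∈ ℝ² : 0 < x and y < 0}. Define F : ℝ → ℝ by F(a) = ∫_{ℝ²} φ(x,y) · e^a/(e^a·x − y)² d(x,y). Then F is differentiable at a = 0 with F'(0) = ∫_{ℝ²} φ(x,y) · (−(x+y))/(x−y)³ d(x,y). -/
open MeasureTheory Real

/-- Let `φ : ℝ² → ℝ` be continuous with compact support contained in the open set
`{(x,y) : 0 < x ∧ y < 0}`.  Define `F a = ∫ φ(x,y) · e^a/(e^a·x − y)² d(x,y)`.  Then `F` is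
differentiable at `a = 0` with `F'(0) = ∫ φ(x,y) · (−(x+y))/(x−y)³ d(x,y)`. -/
theorem liouville_elementary_earthquake_deriv
    (φ : ℝ × ℝ → ℝ) (hφ_cont : Continuous φ) (hφ_supp : HasCompactSupport φ)
    (hφ_set : tsupport φ ⊆ {p : ℝ × ℝ | 0 < p.1 ∧ p.2 < 0})
    (F : ℝ → ℝ)
    (hF : ∀ a : ℝ, F a = ∫ p : ℝ × ℝ, φ p * (Real.exp a / (Real.exp a * p.1 - p.2) ^ 2)) :
    HasDerivAt F (∫ p : ℝ × ℝ, φ p * (-(p.1 + p.2) / (p.1 - p.2) ^ 3)) 0 := by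
  by_cases hne : (tsupport φ).Nonempty
  · -- the main case
    set K := tsupport φ with hK
    -- lower bounds on the support
    obtain ⟨q, hqK, hqmin⟩ := hφ_supp.exists_isMinOn hne
      ((continuous_fst.min continuous_snd.neg).continuousOn)
    set ε : ℝ := min q.1 (-q.2) with hε
    have hεpos : 0 < ε := lt_min (hφ_set hqK).1 (neg_pos.mpr (hφ_set hqK).2)
    have hεK : ∀ p ∈ K, ε ≤ p.1 ∧ p.2 ≤ -ε := by
      intro p hp
      have h : ε ≤ min p.1 (-p.2) := isMinOn_iff.mp hqmin p hp
      exact ⟨le_trans h (min_le_left _ _),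
        by linarith [le_trans h (min_le_right p.1 (-p.2))]⟩
    -- upper bound on the support
    obtain ⟨M, hM⟩ := hφ_supp.isBounded.exists_norm_le
    have hMK : ∀ p ∈ K, |p.1| ≤ M ∧ |p.2| ≤ M := by
      intro p hp
      refine ⟨le_trans ?_ (hM p hp), le_trans ?_ (hM p hp)⟩
      · exact norm_fst_le p
      · exact norm_snd_le p
    have hεM : ε ≤ M :=
      le_trans (min_le_left q.1 (-q.2)) (le_trans (le_abs_self _) (hMK q hqK).1)
    have hM0 : 0 < M := lt_of_lt_of_le hεpos hεM
    -- the integrand and its derivative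
    set G : ℝ → ℝ × ℝ → ℝ := fun a p => φ p * (Real.exp a / (Real.exp a * p.1 - p.2) ^ 2)
      with hGdef
    set G' : ℝ → ℝ × ℝ → ℝ :=
      fun a p => φ p * (Real.exp a * (-(Real.exp a * p.1) - p.2) /
        (Real.exp a * p.1 - p.2) ^ 3) with hG'def
    -- positivity of denominator on the support
    have hden : ∀ (a : ℝ), ∀ p ∈ K, (0:ℝ) < Real.exp a * p.1 - p.2 := by
      intro a p hp
      have h1 : 0 < Real.exp a * p.1 := mul_pos (Real.exp_pos a) (hφ_set hp).1
      have h2 : p.2 < 0 := (hφ_set hp).2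
      linarith
    have hdenε : ∀ (a : ℝ), ∀ p ∈ K, ε ≤ Real.exp a * p.1 - p.2 := by
      intro a p hp
      have h1 : 0 < Real.exp a * p.1 := mul_pos (Real.exp_pos a) (hφ_set hp).1
      have h2 : p.2 ≤ -ε := (hεK p hp).2
      linarith
    -- measurability
    have hmeasG : ∀ a : ℝ, AEStronglyMeasurable (G a) (volume : Measure (ℝ × ℝ)) := by
      intro a
      apply Measurable.aestronglyMeasurable
      exact hφ_cont.measurable.mul ((measurable_const.div
        (((measurable_fst.const_mul _).sub measurable_snd).pow_const 2)))
    have hmeasG' : ∀ a : ℝ, AEStronglyMeasurable (G' a) (volume : Measure (ℝ × ℝ)) := by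
      intro a
      apply Measurable.aestronglyMeasurable
      refine hφ_cont.measurable.mul (Measurable.div ?_ ?_)
      · exact ((measurable_fst.const_mul _).neg.sub measurable_snd).const_mul _
      · exact ((measurable_fst.const_mul _).sub measurable_snd).pow_const 3
    -- the dominating function
    have hφ_int : Integrable φ (volume : Measure (ℝ × ℝ)) :=
      hφ_cont.integrable_of_hasCompactSupport hφ_supp
    set C : ℝ := Real.exp 1 * (Real.exp 1 * M + M) / ε ^ 3 with hC
    have hCpos : 0 < C := by
      apply div_pos
      · have : 0 < Real.exp 1 * M + M := by positivity
        positivity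
      · positivity
    have bound_int : Integrable (fun p => |φ p| * C) (volume : Measure (ℝ × ℝ)) :=
      hφ_int.norm.mul_const C
    -- the bound on G'
    have h_bound : ∀ p : ℝ × ℝ, ∀ a ∈ Metric.ball (0:ℝ) 1, ‖G' a p‖ ≤ |φ p| * C := by
      intro p a ha
      by_cases hp : φ p = 0
      · simp [hG'def, hp]
      · have hpK : p ∈ K := subset_tsupport φ hp
        have hx := (hεK p hpK).1
        have hy := (hεK p hpK).2
        have hxM := (hMK p hpK).1
        have hyM := (hMK p hpK).2
        have ha1 : |a| < 1 := by simpa [Real.dist_eq] using ha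
        have hea : Real.exp a ≤ Real.exp 1 := Real.exp_le_exp.mpr (le_of_lt (abs_lt.mp ha1).2)
        have hd := hdenε a p hpK
        have hdpos := hden a p hpK
        have hnum : |Real.exp a * (-(Real.exp a * p.1) - p.2)| ≤
            Real.exp 1 * (Real.exp 1 * M + M) := by
          rw [abs_mul]
          apply mul_le_mul (by rwa [abs_of_pos (Real.exp_pos a)]) ?_ (abs_nonneg _)
            (le_of_lt (lt_of_lt_of_le (Real.exp_pos 1) (le_refl _)))
          calc |(-(Real.exp a * p.1) - p.2)| ≤ |Real.exp a * p.1| + |p.2| := by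
                rw [sub_eq_add_neg]
                exact le_trans (abs_add_le _ _) (by rw [abs_neg, abs_neg])
            _ ≤ Real.exp 1 * M + M := by
                gcongr
                rw [abs_mul, abs_of_pos (Real.exp_pos a)]
                apply mul_le_mul hea hxM (abs_nonneg _) (le_of_lt (Real.exp_pos 1))
        have hd3 : ε ^ 3 ≤ (Real.exp a * p.1 - p.2) ^ 3 :=
          pow_le_pow_left₀ (le_of_lt hεpos) hd 3
        rw [hG'def]
        simp only [norm_mul, Real.norm_eq_abs, abs_div]
        rw [abs_of_pos (pow_pos hdpos 3)]
        gcongr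
        exact div_le_div₀ (by positivity) hnum (by positivity) hd3
    -- integrability of G 0
    have he1 : (1:ℝ) ≤ Real.exp 1 := Real.one_le_exp zero_le_one
    have hG0_int : Integrable (G 0) (volume : Measure (ℝ × ℝ)) := by
      apply Integrable.mono' bound_int (hmeasG 0)
      filter_upwards with p
      by_cases hp : φ p = 0
      · have : (0:ℝ) ≤ |φ p| * C := by positivity
        simpa [hGdef, hp] using this
      · have hpK : p ∈ K := subset_tsupport φ hp
        have hεd := hdenε 0 p hpK
        have hdpos := hden 0 p hpK
        rw [hGdef]
        simp only [norm_mul, Real.norm_eq_abs, abs_div]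
        gcongr
        rw [abs_of_pos (Real.exp_pos 0), abs_of_pos (pow_pos hdpos 2)]
        rw [hC, div_le_div_iff₀ (pow_pos hdpos 2) (by positivity)]
        set d : ℝ := Real.exp 0 * p.1 - p.2 with hdd
        have hMd : M ≤ Real.exp 1 * (Real.exp 1 * M + M) := by
          nlinarith [mul_le_mul he1 he1 zero_le_one (le_trans zero_le_one he1),
            le_of_lt hM0]
        calc Real.exp 0 * ε ^ 3 = ε * (ε * ε) := by rw [Real.exp_zero]; ring
          _ ≤ M * (d * d) := mul_le_mul hεM
              (mul_le_mul hεd hεd (le_of_lt hεpos) (le_trans (le_of_lt hεpos) hεd))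
              (by positivity) (le_of_lt hM0)
          _ ≤ (Real.exp 1 * (Real.exp 1 * M + M)) * (d * d) :=
              mul_le_mul_of_nonneg_right hMd
                (mul_nonneg (le_of_lt hdpos) (le_of_lt hdpos))
          _ = Real.exp 1 * (Real.exp 1 * M + M) * d ^ 2 := by ring
    -- pointwise differentiability
    have h_diff : ∀ p : ℝ × ℝ, ∀ a : ℝ,
        HasDerivAt (fun a => G a p) (G' a p) a := by
      intro p a
      by_cases hp : φ p = 0
      · have h0 : (fun a => G a p) = fun _ => (0:ℝ) := by
          funext b; simp [hGdef, hp]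
        rw [h0]
        have : G' a p = 0 := by simp [hG'def, hp]
        rw [this]
        exact hasDerivAt_const a 0
      · have hpK : p ∈ K := subset_tsupport φ hp
        have hd : ∀ b : ℝ, Real.exp b * p.1 - p.2 ≠ 0 := fun b => ne_of_gt (hden b p hpK)
        have h1 : HasDerivAt (fun b => Real.exp b * p.1 - p.2)
            (Real.exp a * p.1) a := ((Real.hasDerivAt_exp a).mul_const p.1).sub_const p.2
        have h2 : HasDerivAt (fun b => (Real.exp b * p.1 - p.2) ^ 2)
            (2 * (Real.exp a * p.1 - p.2) ^ 1 * (Real.exp a * p.1)) a := h1.pow 2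
        have h3 : HasDerivAt (fun b => Real.exp b / (Real.exp b * p.1 - p.2) ^ 2)
            ((Real.exp a * (Real.exp a * p.1 - p.2) ^ 2 -
              Real.exp a * (2 * (Real.exp a * p.1 - p.2) ^ 1 * (Real.exp a * p.1))) /
              ((Real.exp a * p.1 - p.2) ^ 2) ^ 2) a :=
          (Real.hasDerivAt_exp a).div h2 (pow_ne_zero 2 (hd a))
        have h4 := h3.const_mul (φ p)
        have hda := hd a
        have hkey : Real.exp a * (-(Real.exp a * p.1) - p.2) /
            (Real.exp a * p.1 - p.2) ^ 3 =
            (Real.exp a * (Real.exp a * p.1 - p.2) ^ 2 -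
              Real.exp a * (2 * (Real.exp a * p.1 - p.2) ^ 1 * (Real.exp a * p.1))) /
              ((Real.exp a * p.1 - p.2) ^ 2) ^ 2 := by
          rw [div_eq_div_iff (pow_ne_zero 3 hda) (pow_ne_zero 2 (pow_ne_zero 2 hda))]
          ring
        have : G' a p = φ p *
            ((Real.exp a * (Real.exp a * p.1 - p.2) ^ 2 -
              Real.exp a * (2 * (Real.exp a * p.1 - p.2) ^ 1 * (Real.exp a * p.1))) /
              ((Real.exp a * p.1 - p.2) ^ 2) ^ 2) := by
          rw [hG'def]; dsimp only; rw [hkey]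
        rw [this]
        exact h4
    -- apply differentiation under the integral sign
    have main := hasDerivAt_integral_of_dominated_loc_of_deriv_le
      (μ := (volume : Measure (ℝ × ℝ))) (F := G) (F' := G') (x₀ := (0:ℝ))
      (bound := fun p => |φ p| * C) (Metric.ball_mem_nhds (0:ℝ) zero_lt_one)
      (Filter.Eventually.of_forall fun a => hmeasG a) hG0_int (hmeasG' 0)
      (Filter.Eventually.of_forall fun p => fun a ha => h_bound p a ha)
      bound_int
      (Filter.Eventually.of_forall fun p => fun a _ => h_diff p a)
    have hFeq : F = fun a => ∫ p : ℝ × ℝ, G a p := by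
      funext a; exact hF a
    have hint_eq : (∫ p : ℝ × ℝ, G' 0 p) =
        ∫ p : ℝ × ℝ, φ p * (-(p.1 + p.2) / (p.1 - p.2) ^ 3) := by
      congr 1
      funext p
      rw [hG'def]
      simp only [Real.exp_zero, one_mul]
      ring_nf
    rw [hFeq, ← hint_eq]
    exact main.2
  · -- trivial case: φ = 0
    have hφ0 : φ = 0 := by
      ext p
      by_contra h
      exact hne ⟨p, subset_tsupport φ h⟩
    have hF0 : ∀ a, F a = 0 := by
      intro a
      rw [hF a, hφ0]
      simp
    have : F = fun _ => (0:ℝ) := funext hF0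
    rw [this, hφ0]
    simpa using hasDerivAt_const (0:ℝ) (0:ℝ)
end

section
/- Let p, q, r, s ∈ ℝ with p·s − q·r = 1, and let φ : ℝ² → ℝ be continuous with compact support contained in {(x,y) ∈ ℝ² : x ≠ y}; assume moreover that if r ≠ 0 then the support of φ is disjoint from the two lines {x = p/r} and {y = p/r}. Define ψ : ℝ² → ℝ by ψ(x,y) = φ((p·x+q)/(r·x+s), (p·y+q)/(r·y+s)) whenever r·x+s ≠ 0 and r·y+s ≠ 0, and ψ(x,y) = 0 otherwise. Then ∫_{ℝ²} ψ(x,y)/(x−y)² d(x,y) = ∫_{ℝ²} φ(x,y)/(x−y)² d(x,y). (Invariance of the Liouville measure under Möbius transformations acting diagonally on pairs of boundary points.) -/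
open MeasureTheory ContinuousLinearMap

section
variable {p q r s : ℝ} (hdet : p * s - q * r = 1)
include hdet

lemma mob_deriv (x : ℝ) (hx : r*x+s ≠ 0) :
    HasDerivAt (fun x => (p*x+q)/(r*x+s)) (((r*x+s)^2)⁻¹) x := by
  have h1 : HasDerivAt (fun x : ℝ => p*x+q) p x := by
    simpa using ((hasDerivAt_id x).const_mul p).add_const q
  have h2 : HasDerivAt (fun x : ℝ => r*x+s) r x := by
    simpa using ((hasDerivAt_id x).const_mul r).add_const s
  have h := h1.div h2 hx
  have hnum : p*(r*x+s) - (p*x+q)*r = 1 := by linear_combination hdet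
  rw [hnum, one_div] at h
  exact h

lemma mob_aux1 {a : ℝ} (ha : r*a+s ≠ 0) : p - r*((p*a+q)/(r*a+s)) = (r*a+s)⁻¹ := by
  field_simp
  linear_combination hdet

lemma mob_aux2 {a : ℝ} (ha : r*a+s ≠ 0) :
    (s*((p*a+q)/(r*a+s)) - q)/(p - r*((p*a+q)/(r*a+s))) = a := by
  have h2 : p - r*((p*a+q)/(r*a+s)) ≠ 0 := by
    rw [mob_aux1 hdet ha]; exact inv_ne_zero ha
  rw [div_eq_iff h2, mob_aux1 hdet ha]
  linear_combination q * (inv_mul_cancel₀ ha) + a * (r*a+s)⁻¹ * hdet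

lemma mob_aux3 {w : ℝ} (hw : p - r*w ≠ 0) : r*((s*w-q)/(p-r*w)) + s = (p-r*w)⁻¹ := by
  field_simp
  linear_combination hdet

lemma mob_aux4 {w : ℝ} (hw : p - r*w ≠ 0) :
    (p*((s*w-q)/(p-r*w))+q)/(r*((s*w-q)/(p-r*w))+s) = w := by
  have h3 : r*((s*w-q)/(p-r*w)) + s ≠ 0 := by
    rw [mob_aux3 hdet hw]; exact inv_ne_zero hw
  rw [div_eq_iff h3, mob_aux3 hdet hw]
  linear_combination -q * (inv_mul_cancel₀ hw) + w * (p-r*w)⁻¹ * hdet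

lemma mob_sub {a b : ℝ} (ha : r*a+s ≠ 0) (hb : r*b+s ≠ 0) :
    (p*a+q)/(r*a+s) - (p*b+q)/(r*b+s) = (a-b)/((r*a+s)*(r*b+s)) := by
  rw [div_sub_div _ _ ha hb]
  congr 1
  linear_combination (a-b) * hdet

end

lemma det_aux (a b : ℝ) :
    ((ContinuousLinearMap.prodMap (ContinuousLinearMap.smulRight (1:ℝ→L[ℝ]ℝ) a)
      (ContinuousLinearMap.smulRight (1:ℝ→L[ℝ]ℝ) b)).det) = a * b := by
  have : ((ContinuousLinearMap.prodMap (ContinuousLinearMap.smulRight (1:ℝ→L[ℝ]ℝ) a)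
      (ContinuousLinearMap.smulRight (1:ℝ→L[ℝ]ℝ) b)) : (ℝ×ℝ) →ₗ[ℝ] ℝ×ℝ)
      = Matrix.toLin (Module.Basis.finTwoProd ℝ) (Module.Basis.finTwoProd ℝ) !![a,0;0,b] := by
    apply LinearMap.ext
    intro x
    simp [Matrix.toLin_finTwoProd_apply, Prod.ext_iff, mul_comm]
  show LinearMap.det _ = a*b
  rw [this, LinearMap.det_toLin, Matrix.det_fin_two_of]
  ring


/-- invariance of the Liouville measure `dx·dy/(x−y)²` under Möbius transformations
acting diagonally on pairs of boundary points. -/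
theorem liouville_measure_moebius_invariant
    (p q r s : ℝ) (hdet : p * s - q * r = 1)
    (φ : ℝ × ℝ → ℝ) (hφ_cont : Continuous φ) (hφ_supp : HasCompactSupport φ)
    (hφ_diag : tsupport φ ⊆ {v : ℝ × ℝ | v.1 ≠ v.2})
    (hφ_pole : r ≠ 0 → ∀ v ∈ tsupport φ, v.1 ≠ p / r ∧ v.2 ≠ p / r)
    (ψ : ℝ × ℝ → ℝ)
    (hψ : ∀ v : ℝ × ℝ, ψ v =
      if r * v.1 + s ≠ 0 ∧ r * v.2 + s ≠ 0 then
        φ ((p * v.1 + q) / (r * v.1 + s), (p * v.2 + q) / (r * v.2 + s))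
      else 0) :
    ∫ v : ℝ × ℝ, ψ v / (v.1 - v.2) ^ 2 = ∫ v : ℝ × ℝ, φ v / (v.1 - v.2) ^ 2 := by
  classical
  set S : Set (ℝ × ℝ) := {v : ℝ × ℝ | r * v.1 + s ≠ 0 ∧ r * v.2 + s ≠ 0} with hSdef
  have hSopen : IsOpen S := by
    have h1 : IsOpen {v : ℝ × ℝ | r * v.1 + s ≠ 0} :=
      isOpen_ne_fun (by fun_prop) continuous_const
    have h2 : IsOpen {v : ℝ × ℝ | r * v.2 + s ≠ 0} :=
      isOpen_ne_fun (by fun_prop) continuous_const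
    exact h1.inter h2
  have hSmeas : MeasurableSet S := hSopen.measurableSet
  set f : ℝ × ℝ → ℝ × ℝ :=
    fun v => ((p * v.1 + q) / (r * v.1 + s), (p * v.2 + q) / (r * v.2 + s)) with hfdef
  set F' : ℝ × ℝ → (ℝ × ℝ →L[ℝ] ℝ × ℝ) := fun v =>
    (ContinuousLinearMap.smulRight (1:ℝ→L[ℝ]ℝ) (((r * v.1 + s) ^ 2)⁻¹)).prodMap
      (ContinuousLinearMap.smulRight (1:ℝ→L[ℝ]ℝ) (((r * v.2 + s) ^ 2)⁻¹)) with hF'def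
  have hderiv : ∀ v ∈ S, HasFDerivWithinAt f (F' v) S v := by
    intro v hv
    have h1 := ((mob_deriv hdet v.1 hv.1).hasFDerivAt)
    have h2 := ((mob_deriv hdet v.2 hv.2).hasFDerivAt)
    exact (HasFDerivAt.prodMap v h1 h2).hasFDerivWithinAt
  have hinj : Set.InjOn f S := by
    intro a ha b hb hab
    have h1 : (p * a.1 + q) / (r * a.1 + s) = (p * b.1 + q) / (r * b.1 + s) :=
      congrArg Prod.fst hab
    have h2 : (p * a.2 + q) / (r * a.2 + s) = (p * b.2 + q) / (r * b.2 + s) :=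
      congrArg Prod.snd hab
    have e1 : a.1 = b.1 := by
      rw [← mob_aux2 hdet ha.1, ← mob_aux2 hdet hb.1, h1]
    have e2 : a.2 = b.2 := by
      rw [← mob_aux2 hdet ha.2, ← mob_aux2 hdet hb.2, h2]
    exact Prod.ext e1 e2
  have key := integral_image_eq_integral_abs_det_fderiv_smul volume hSmeas hderiv hinj
    (fun w => φ w / (w.1 - w.2) ^ 2)
  have hp0 : r = 0 → p ≠ 0 := by
    intro hr hp; rw [hr, hp] at hdet; simp at hdet
  have hL : ∫ w in f '' S, φ w / (w.1 - w.2) ^ 2 = ∫ w, φ w / (w.1 - w.2) ^ 2 := by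
    apply setIntegral_eq_integral_of_forall_compl_eq_zero
    intro w hw
    have hφw : φ w = 0 := by
      by_contra hne
      apply hw
      have hwsupp : w ∈ tsupport φ := subset_tsupport φ hne
      have hd1 : p - r * w.1 ≠ 0 := by
        rcases eq_or_ne r 0 with hr | hr
        · rw [hr]; simpa using hp0 hr
        · have := (hφ_pole hr w hwsupp).1
          intro h; apply this; field_simp; linarith
      have hd2 : p - r * w.2 ≠ 0 := by
        rcases eq_or_ne r 0 with hr | hr
        · rw [hr]; simpa using hp0 hr
        · have := (hφ_pole hr w hwsupp).2
          intro h; apply this; field_simp; linarith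
      refine ⟨((s * w.1 - q) / (p - r * w.1), (s * w.2 - q) / (p - r * w.2)), ⟨?_, ?_⟩, ?_⟩
      · show r * ((s * w.1 - q) / (p - r * w.1)) + s ≠ 0
        rw [mob_aux3 hdet hd1]; exact inv_ne_zero hd1
      · show r * ((s * w.2 - q) / (p - r * w.2)) + s ≠ 0
        rw [mob_aux3 hdet hd2]; exact inv_ne_zero hd2
      · exact Prod.ext (mob_aux4 hdet hd1) (mob_aux4 hdet hd2)
    simp [hφw]
  have hR0 : ∫ v, ψ v / (v.1 - v.2) ^ 2 = ∫ v in S, ψ v / (v.1 - v.2) ^ 2 := by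
    refine (setIntegral_eq_integral_of_forall_compl_eq_zero fun v hv => ?_).symm
    have : ψ v = 0 := by rw [hψ v, if_neg]; exact hv
    simp [this]
  have hR : ∫ v in S, ψ v / (v.1 - v.2) ^ 2
      = ∫ v in S, |(F' v).det| • (φ (f v) / ((f v).1 - (f v).2) ^ 2) := by
    apply setIntegral_congr_fun hSmeas
    intro v hv
    have h1 : r * v.1 + s ≠ 0 := hv.1
    have h2 : r * v.2 + s ≠ 0 := hv.2
    have hψv : ψ v = φ (f v) := by rw [hψ v, if_pos ⟨h1, h2⟩]
    have hdetv : (F' v).det = ((r * v.1 + s) ^ 2)⁻¹ * ((r * v.2 + s) ^ 2)⁻¹ := det_aux _ _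
    have hsub : (f v).1 - (f v).2 = (v.1 - v.2) / ((r * v.1 + s) * (r * v.2 + s)) :=
      mob_sub hdet h1 h2
    show ψ v / (v.1 - v.2) ^ 2 = |(F' v).det| • (φ (f v) / ((f v).1 - (f v).2) ^ 2)
    rcases eq_or_ne v.1 v.2 with he | he
    · simp [hψv, hsub, he]
    · have hd : v.1 - v.2 ≠ 0 := sub_ne_zero.mpr he
      rw [hψv, hdetv, hsub, smul_eq_mul, abs_of_pos (by positivity)]
      rw [div_pow]
      rw [div_div_eq_mul_div, mul_pow]
      field_simp
      rw [mul_assoc, mul_div_assoc, div_self (mul_ne_zero (by rwa [mul_comm]) (by rwa [mul_comm])), mul_one]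
  rw [hR0, hR, ← key, hL]
end

section
/- Let a < c < b be real numbers, let ψ : ℝ → ℝ be continuous on [a, b], and set I = ∫_a^b ψ(x)·(2x−a−b)/(b−a) dx − ∫_a^c ψ(x)·(2x−a−c)/(c−a) dx − ∫_c^b ψ(x)·(2x−c−b)/(b−c) dx. Then |I| ≤ 2·((c−a)(b−c)/(b−a))·sup_{x ∈ [a,b]} |ψ(x) − ψ(c)|. -/
open intervalIntegral Set

private lemma weight_integral_zero (p q : ℝ) (h : p < q) :
    ∫ x in p..q, (2 * x - p - q) / (q - p) = 0 := by
  have heq : (fun x : ℝ => (2 * x - p - q) / (q - p)) =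
      fun x => (2 / (q - p)) * x + (-(p + q) / (q - p)) := by
    funext x; ring
  rw [heq, intervalIntegral.integral_add (f := fun x => (2 / (q - p)) * x)
      (g := fun _ => -(p + q) / (q - p)) (by apply Continuous.intervalIntegrable; fun_prop)
      intervalIntegrable_const,
    intervalIntegral.integral_const_mul, integral_id, intervalIntegral.integral_const]
  have hqp : q - p ≠ 0 := sub_ne_zero.mpr h.ne'
  simp only [smul_eq_mul]
  field_simp
  ring

private lemma integral_sub_left (p q : ℝ) : ∫ x in p..q, (x - p) = (q - p) ^ 2 / 2 := by
  rw [intervalIntegral.integral_sub (f := fun x => x) (g := fun _ => p)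
      (by apply Continuous.intervalIntegrable; fun_prop) intervalIntegrable_const,
    integral_id, intervalIntegral.integral_const]
  simp; ring

private lemma integral_sub_right (p q : ℝ) : ∫ x in p..q, (q - x) = (q - p) ^ 2 / 2 := by
  rw [intervalIntegral.integral_sub (f := fun _ => q) (g := fun x => x)
      intervalIntegrable_const (by apply Continuous.intervalIntegrable; fun_prop),
    integral_id, intervalIntegral.integral_const]
  simp; ring

/-- the fundamental integral estimate: the triangle contribution `I` is bounded by
`2·((c−a)(b−c)/(b−a))` times the oscillation of `ψ` around its value at `c` on `[a,b]`. -/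
theorem triangle_integral_oscillation_bound
    (a b c : ℝ) (hac : a < c) (hcb : c < b)
    (ψ : ℝ → ℝ) (hψ : ContinuousOn ψ (Set.Icc a b))
    (I : ℝ)
    (hI : I = (∫ x in a..b, ψ x * ((2 * x - a - b) / (b - a))) -
      (∫ x in a..c, ψ x * ((2 * x - a - c) / (c - a))) -
      (∫ x in c..b, ψ x * ((2 * x - c - b) / (b - c)))) :
    |I| ≤ 2 * ((c - a) * (b - c) / (b - a)) * (⨆ x ∈ Set.Icc a b, |ψ x - ψ c|) := by
  have hab : a < b := hac.trans hcb
  have hba : b - a ≠ 0 := sub_ne_zero.mpr hab.ne'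
  have hca : c - a ≠ 0 := sub_ne_zero.mpr hac.ne'
  have hbc : b - c ≠ 0 := sub_ne_zero.mpr hcb.ne'
  set M : ℝ := ⨆ x ∈ Set.Icc a b, |ψ x - ψ c| with hMdef
  -- bound on M
  have hbdd : BddAbove ((fun x => |ψ x - ψ c|) '' Set.Icc a b) :=
    (isCompact_Icc.image_of_continuousOn ((hψ.sub continuousOn_const).abs)).bddAbove
  have hbdd2 : BddAbove (Set.range fun x => ⨆ _ : x ∈ Set.Icc a b, |ψ x - ψ c|) := by
    obtain ⟨B, hB⟩ := hbdd
    refine ⟨max B 0, ?_⟩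
    rintro _ ⟨x, rfl⟩
    dsimp only
    by_cases hx : x ∈ Set.Icc a b
    · rw [ciSup_pos hx]
      exact le_max_of_le_left (hB ⟨x, hx, rfl⟩)
    · have : IsEmpty (x ∈ Set.Icc a b) := ⟨hx⟩
      rw [Real.iSup_of_isEmpty]
      exact le_max_right _ _
  have hM : ∀ y ∈ Set.Icc a b, |ψ y - ψ c| ≤ M := by
    intro y hy
    have := le_ciSup hbdd2 y
    rwa [ciSup_pos hy] at this
  have hcmem : c ∈ Set.Icc a b := ⟨hac.le, hcb.le⟩
  have hM0 : 0 ≤ M := le_trans (by simp) (hM c hcmem)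
  -- kernels
  set K1 : ℝ → ℝ := fun x => -2 * (b - c) * (x - a) / ((b - a) * (c - a)) with hK1def
  set K2 : ℝ → ℝ := fun x => 2 * (c - a) * (b - x) / ((b - a) * (b - c)) with hK2def
  have hK1 : ∀ x : ℝ, (2 * x - a - b) / (b - a) - (2 * x - a - c) / (c - a) = K1 x := by
    intro x; rw [hK1def]; field_simp; ring
  have hK2 : ∀ x : ℝ, (2 * x - a - b) / (b - a) - (2 * x - c - b) / (b - c) = K2 x := by
    intro x; rw [hK2def]; field_simp; ring
  -- continuity / integrability facts
  have hψac : ContinuousOn ψ (Set.uIcc a c) := by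
    rw [Set.uIcc_of_le hac.le]; exact hψ.mono (Set.Icc_subset_Icc le_rfl hcb.le)
  have hψcb : ContinuousOn ψ (Set.uIcc c b) := by
    rw [Set.uIcc_of_le hcb.le]; exact hψ.mono (Set.Icc_subset_Icc hac.le le_rfl)
  have hK1c : Continuous K1 := by rw [hK1def]; fun_prop
  have hK2c : Continuous K2 := by rw [hK2def]; fun_prop
  have int1 : IntervalIntegrable (fun x => ψ x * ((2 * x - a - b) / (b - a))) MeasureTheory.volume a c :=
    (hψac.mul (by fun_prop)).intervalIntegrable
  have int2 : IntervalIntegrable (fun x => ψ x * ((2 * x - a - b) / (b - a))) MeasureTheory.volume c b :=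
    (hψcb.mul (by fun_prop)).intervalIntegrable
  have int3 : IntervalIntegrable (fun x => ψ x * ((2 * x - a - c) / (c - a))) MeasureTheory.volume a c :=
    (hψac.mul (by fun_prop)).intervalIntegrable
  have int4 : IntervalIntegrable (fun x => ψ x * ((2 * x - c - b) / (b - c))) MeasureTheory.volume c b :=
    (hψcb.mul (by fun_prop)).intervalIntegrable
  have intK1ψ : IntervalIntegrable (fun x => ψ x * K1 x) MeasureTheory.volume a c :=
    (hψac.mul hK1c.continuousOn).intervalIntegrable
  have intK2ψ : IntervalIntegrable (fun x => ψ x * K2 x) MeasureTheory.volume c b :=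
    (hψcb.mul hK2c.continuousOn).intervalIntegrable
  have intfK1 : IntervalIntegrable (fun x => (ψ x - ψ c) * K1 x) MeasureTheory.volume a c :=
    ((hψac.sub continuousOn_const).mul hK1c.continuousOn).intervalIntegrable
  have intfK2 : IntervalIntegrable (fun x => (ψ x - ψ c) * K2 x) MeasureTheory.volume c b :=
    ((hψcb.sub continuousOn_const).mul hK2c.continuousOn).intervalIntegrable
  -- integrals of the kernels
  have hIK1 : ∫ x in a..c, K1 x = -((b - c) * (c - a) / (b - a)) := by
    have : (fun x => K1 x) = fun x => (-2 * (b - c) / ((b - a) * (c - a))) * (x - a) := by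
      funext x; rw [hK1def]; ring
    rw [this, intervalIntegral.integral_const_mul, integral_sub_left]
    field_simp
  have hIK2 : ∫ x in c..b, K2 x = (b - c) * (c - a) / (b - a) := by
    have : (fun x => K2 x) = fun x => (2 * (c - a) / ((b - a) * (b - c))) * (b - x) := by
      funext x; rw [hK2def]; ring
    rw [this, intervalIntegral.integral_const_mul, integral_sub_right]
    field_simp
  -- rewrite I
  have key : I = (∫ x in a..c, (ψ x - ψ c) * K1 x) + (∫ x in c..b, (ψ x - ψ c) * K2 x) := by
    have hsplit : (∫ x in a..b, ψ x * ((2 * x - a - b) / (b - a))) =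
        (∫ x in a..c, ψ x * ((2 * x - a - b) / (b - a))) +
        (∫ x in c..b, ψ x * ((2 * x - a - b) / (b - a))) :=
      (integral_add_adjacent_intervals int1 int2).symm
    have h1 : (∫ x in a..c, ψ x * ((2 * x - a - b) / (b - a))) -
        (∫ x in a..c, ψ x * ((2 * x - a - c) / (c - a))) = ∫ x in a..c, ψ x * K1 x := by
      rw [← intervalIntegral.integral_sub int1 int3]
      congr 1; funext x; rw [← hK1 x]; ring
    have h2 : (∫ x in c..b, ψ x * ((2 * x - a - b) / (b - a))) -
        (∫ x in c..b, ψ x * ((2 * x - c - b) / (b - c))) = ∫ x in c..b, ψ x * K2 x := by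
      rw [← intervalIntegral.integral_sub int2 int4]
      congr 1; funext x; rw [← hK2 x]; ring
    have h3 : ∫ x in a..c, (ψ x - ψ c) * K1 x =
        (∫ x in a..c, ψ x * K1 x) - ψ c * ∫ x in a..c, K1 x := by
      rw [← intervalIntegral.integral_const_mul, ← intervalIntegral.integral_sub (g := fun x => ψ c * K1 x) intK1ψ
        ((continuous_const.mul hK1c).intervalIntegrable _ _)]
      congr 1; funext x; ring
    have h4 : ∫ x in c..b, (ψ x - ψ c) * K2 x =
        (∫ x in c..b, ψ x * K2 x) - ψ c * ∫ x in c..b, K2 x := by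
      rw [← intervalIntegral.integral_const_mul, ← intervalIntegral.integral_sub (g := fun x => ψ c * K2 x) intK2ψ
        ((continuous_const.mul hK2c).intervalIntegrable _ _)]
      congr 1; funext x; ring
    rw [h3, h4, hIK1, hIK2, hI, hsplit]
    rw [← h1, ← h2] at *
    ring
  -- bounds on each piece
  have bound1 : |∫ x in a..c, (ψ x - ψ c) * K1 x| ≤ M * ((b - c) * (c - a) / (b - a)) := by
    have habs : |∫ x in a..c, (ψ x - ψ c) * K1 x| ≤ ∫ x in a..c, |(ψ x - ψ c) * K1 x| :=
      intervalIntegral.abs_integral_le_integral_abs hac.le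
    have hmono : (∫ x in a..c, |(ψ x - ψ c) * K1 x|) ≤
        ∫ x in a..c, (M * (2 * (b - c) / ((b - a) * (c - a)))) * (x - a) := by
      apply intervalIntegral.integral_mono_on hac.le intfK1.abs
        (by apply Continuous.intervalIntegrable; fun_prop)
      intro x hx
      have hx1 : x ∈ Set.Icc a b := ⟨hx.1, hx.2.trans hcb.le⟩
      have h1 : |ψ x - ψ c| ≤ M := hM x hx1
      have hxa : 0 ≤ x - a := sub_nonneg.mpr hx.1
      have hnum : 0 ≤ 2 * (b - c) * (x - a) := by nlinarith
      have hden : 0 ≤ (b - a) * (c - a) := by nlinarith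
      have hK1x : K1 x = -(2 * (b - c) * (x - a) / ((b - a) * (c - a))) := by
        rw [hK1def]; ring
      have h2 : |K1 x| = 2 * (b - c) * (x - a) / ((b - a) * (c - a)) := by
        rw [hK1x, abs_neg, abs_of_nonneg (div_nonneg hnum hden)]
      calc |(ψ x - ψ c) * K1 x| = |ψ x - ψ c| * |K1 x| := abs_mul _ _
        _ ≤ M * |K1 x| := mul_le_mul_of_nonneg_right h1 (abs_nonneg _)
        _ = (M * (2 * (b - c) / ((b - a) * (c - a)))) * (x - a) := by rw [h2]; ring
    have hrhs : (∫ x in a..c, (M * (2 * (b - c) / ((b - a) * (c - a)))) * (x - a)) =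
        M * ((b - c) * (c - a) / (b - a)) := by
      rw [intervalIntegral.integral_const_mul, integral_sub_left]
      field_simp
    linarith [habs, hmono, hrhs.le, hrhs.ge]
  have bound2 : |∫ x in c..b, (ψ x - ψ c) * K2 x| ≤ M * ((b - c) * (c - a) / (b - a)) := by
    have habs : |∫ x in c..b, (ψ x - ψ c) * K2 x| ≤ ∫ x in c..b, |(ψ x - ψ c) * K2 x| :=
      intervalIntegral.abs_integral_le_integral_abs hcb.le
    have hmono : (∫ x in c..b, |(ψ x - ψ c) * K2 x|) ≤
        ∫ x in c..b, (M * (2 * (c - a) / ((b - a) * (b - c)))) * (b - x) := by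
      apply intervalIntegral.integral_mono_on hcb.le intfK2.abs
        (by apply Continuous.intervalIntegrable; fun_prop)
      intro x hx
      have hx1 : x ∈ Set.Icc a b := ⟨hac.le.trans hx.1, hx.2⟩
      have h1 : |ψ x - ψ c| ≤ M := hM x hx1
      have hxb : 0 ≤ b - x := sub_nonneg.mpr hx.2
      have hnum : 0 ≤ 2 * (c - a) * (b - x) := by nlinarith
      have hden : 0 ≤ (b - a) * (b - c) := by nlinarith
      have h2 : |K2 x| = 2 * (c - a) * (b - x) / ((b - a) * (b - c)) := by
        rw [hK2def]; exact abs_of_nonneg (div_nonneg hnum hden)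
      calc |(ψ x - ψ c) * K2 x| = |ψ x - ψ c| * |K2 x| := abs_mul _ _
        _ ≤ M * |K2 x| := mul_le_mul_of_nonneg_right h1 (abs_nonneg _)
        _ = (M * (2 * (c - a) / ((b - a) * (b - c)))) * (b - x) := by rw [h2]; ring
    have hrhs : (∫ x in c..b, (M * (2 * (c - a) / ((b - a) * (b - c)))) * (b - x)) =
        M * ((b - c) * (c - a) / (b - a)) := by
      rw [intervalIntegral.integral_const_mul, integral_sub_right]
      field_simp
    linarith [habs, hmono, hrhs.le, hrhs.ge]
  have hfin : |I| ≤ M * ((b - c) * (c - a) / (b - a)) + M * ((b - c) * (c - a) / (b - a)) := by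
    rw [key]
    exact (abs_add_le _ _).trans (add_le_add bound1 bound2)
  have heq : 2 * ((c - a) * (b - c) / (b - a)) * M =
      M * ((b - c) * (c - a) / (b - a)) + M * ((b - c) * (c - a) / (b - a)) := by ring
  linarith
end

section
/- Let a < c < b be real numbers and let ψ : ℝ → ℝ be continuous on [a, b]. Set I = ∫_a^b ψ(x)·(2x−a−b)/(b−a) dx − ∫_a^c ψ(x)·(2x−a−c)/(c−a) dx − ∫_c^b ψ(x)·(2x−c−b)/(b−c) dx. Then |I| ≤ 2·(sup_{x ∈ [a,b]} |ψ(x)|)·((c−a)(b−c)/(b−a)). -/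
lemma le_biSup_of_bdd {s : Set ℝ} {f : ℝ → ℝ} (hf : ∀ y ∈ s, 0 ≤ f y)
    (h : BddAbove (f '' s)) {x : ℝ} (hx : x ∈ s) :
    f x ≤ ⨆ y ∈ s, f y := by
  have hr : BddAbove (Set.range fun i : s => f ↑i) := by rw [← Set.image_eq_range]; exact h
  have h0 : sSup (∅ : Set ℝ) ≤ ⨆ i : s, f ↑i := by
    rw [Real.sSup_empty]
    exact le_trans (hf x hx) (le_ciSup_set h hx)
  have := le_csSup h (Set.mem_image_of_mem f hx)
  rwa [csSup_image hr h0] at this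

open intervalIntegral in
lemma integral_sub_const (a c k : ℝ) : ∫ x in a..c, (x - k) = (c - k)^2/2 - (a - k)^2/2 := by
  rw [intervalIntegral.integral_sub intervalIntegrable_id intervalIntegrable_const]
  simp [integral_id]; ring

open intervalIntegral in
lemma integral_const_sub (a c k : ℝ) : ∫ x in a..c, (k - x) = (a - k)^2/2 - (c - k)^2/2 := by
  rw [intervalIntegral.integral_sub intervalIntegrable_const intervalIntegrable_id]
  simp [integral_id]; ring

/-- the sup-norm estimate for the triangle contribution `I`. -/
theorem triangle_integral_sup_bound
    (a b c : ℝ) (hac : a < c) (hcb : c < b)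
    (ψ : ℝ → ℝ) (hψ : ContinuousOn ψ (Set.Icc a b))
    (I : ℝ)
    (hI : I = (∫ x in a..b, ψ x * ((2 * x - a - b) / (b - a))) -
      (∫ x in a..c, ψ x * ((2 * x - a - c) / (c - a))) -
      (∫ x in c..b, ψ x * ((2 * x - c - b) / (b - c)))) :
    |I| ≤ 2 * (⨆ x ∈ Set.Icc a b, |ψ x|) * ((c - a) * (b - c) / (b - a)) := by
  have hab : a < b := hac.trans hcb
  have hba : (0:ℝ) < b - a := by linarith
  have hca : (0:ℝ) < c - a := by linarith
  have hbc : (0:ℝ) < b - c := by linarith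
  set M := ⨆ x ∈ Set.Icc a b, |ψ x| with hMdef
  have hbdd : BddAbove ((fun x => |ψ x|) '' Set.Icc a b) :=
    (isCompact_Icc.image_of_continuousOn hψ.abs).bddAbove
  have hM : ∀ x ∈ Set.Icc a b, |ψ x| ≤ M := fun x hx =>
    le_biSup_of_bdd (fun y _ => abs_nonneg _) hbdd hx
  have hM0 : 0 ≤ M := le_trans (abs_nonneg _) (hM a ⟨le_refl a, hab.le⟩)
  -- the two weight functions
  set g1 : ℝ → ℝ := fun x => 2*(b-c)/((c-a)*(b-a)) * (x - a) with hg1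
  set g2 : ℝ → ℝ := fun x => 2*(c-a)/((b-c)*(b-a)) * (b - x) with hg2
  have hsub1 : Set.Icc a c ⊆ Set.Icc a b := Set.Icc_subset_Icc le_rfl hcb.le
  have hsub2 : Set.Icc c b ⊆ Set.Icc a b := Set.Icc_subset_Icc hac.le le_rfl
  -- continuity/integrability helpers
  have hcont : ∀ (w : ℝ → ℝ), Continuous w →
      ∀ (p q : ℝ), Set.uIcc p q ⊆ Set.Icc a b →
      IntervalIntegrable (fun x => ψ x * w x) MeasureTheory.volume p q := by
    intro w hw p q hpq
    exact ((hψ.mono hpq).mul (hw.continuousOn)).intervalIntegrable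
  have huIcc1 : Set.uIcc a c ⊆ Set.Icc a b := by
    rw [Set.uIcc_of_le hac.le]; exact hsub1
  have huIcc2 : Set.uIcc c b ⊆ Set.Icc a b := by
    rw [Set.uIcc_of_le hcb.le]; exact hsub2
  have hwab : Continuous (fun x : ℝ => (2 * x - a - b) / (b - a)) := by fun_prop
  have hwac : Continuous (fun x : ℝ => (2 * x - a - c) / (c - a)) := by fun_prop
  have hwcb : Continuous (fun x : ℝ => (2 * x - c - b) / (b - c)) := by fun_prop
  have hg1c : Continuous g1 := by rw [hg1]; fun_prop
  have hg2c : Continuous g2 := by rw [hg2]; fun_prop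
  -- split the first integral
  have hsplit : (∫ x in a..b, ψ x * ((2 * x - a - b) / (b - a)))
      = (∫ x in a..c, ψ x * ((2 * x - a - b) / (b - a)))
      + (∫ x in c..b, ψ x * ((2 * x - a - b) / (b - a))) :=
    (intervalIntegral.integral_add_adjacent_intervals
      (hcont _ hwab a c huIcc1) (hcont _ hwab c b huIcc2)).symm
  -- rewrite I as sum of two local integrals
  have hI2 : I = (∫ x in c..b, ψ x * g2 x) - (∫ x in a..c, ψ x * g1 x) := by
    rw [hI, hsplit]
    have h1 : (∫ x in a..c, ψ x * ((2 * x - a - b) / (b - a)))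
        - (∫ x in a..c, ψ x * ((2 * x - a - c) / (c - a)))
        = - ∫ x in a..c, ψ x * g1 x := by
      rw [← intervalIntegral.integral_sub (hcont _ hwab a c huIcc1) (hcont _ hwac a c huIcc1),
        ← intervalIntegral.integral_neg]
      apply intervalIntegral.integral_congr
      intro x _
      rw [hg1]
      field_simp
      ring
    have h2 : (∫ x in c..b, ψ x * ((2 * x - a - b) / (b - a)))
        - (∫ x in c..b, ψ x * ((2 * x - c - b) / (b - c)))
        = ∫ x in c..b, ψ x * g2 x := by
      rw [← intervalIntegral.integral_sub (hcont _ hwab c b huIcc2) (hcont _ hwcb c b huIcc2)]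
      apply intervalIntegral.integral_congr
      intro x _
      rw [hg2]
      field_simp
      ring
    linarith [h1, h2]
  -- value of the weight integrals
  have hint1 : (∫ x in a..c, g1 x) = (c - a) * (b - c) / (b - a) := by
    rw [hg1]
    rw [intervalIntegral.integral_const_mul, integral_sub_const]
    field_simp
    ring
  have hint2 : (∫ x in c..b, g2 x) = (c - a) * (b - c) / (b - a) := by
    rw [hg2]
    rw [intervalIntegral.integral_const_mul, integral_const_sub]
    field_simp
    ring
  -- bound each local integral
  have hbound1 : |∫ x in a..c, ψ x * g1 x| ≤ M * ((c - a) * (b - c) / (b - a)) := by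
    calc |∫ x in a..c, ψ x * g1 x| ≤ ∫ x in a..c, |ψ x * g1 x| :=
          intervalIntegral.abs_integral_le_integral_abs hac.le
      _ ≤ ∫ x in a..c, M * g1 x := by
          apply intervalIntegral.integral_mono_on hac.le
          · exact (((hψ.mono huIcc1).mul hg1c.continuousOn).abs).intervalIntegrable
          · exact (continuous_const.mul hg1c).intervalIntegrable _ _
          · intro x hx
            have hg1nn : 0 ≤ g1 x := by
              rw [hg1]
              have : (0:ℝ) ≤ x - a := by linarith [hx.1]
              positivity
            rw [abs_mul, abs_of_nonneg hg1nn]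
            exact mul_le_mul_of_nonneg_right (hM x (hsub1 hx)) hg1nn
      _ = M * ((c - a) * (b - c) / (b - a)) := by
          rw [intervalIntegral.integral_const_mul, hint1]
  have hbound2 : |∫ x in c..b, ψ x * g2 x| ≤ M * ((c - a) * (b - c) / (b - a)) := by
    calc |∫ x in c..b, ψ x * g2 x| ≤ ∫ x in c..b, |ψ x * g2 x| :=
          intervalIntegral.abs_integral_le_integral_abs hcb.le
      _ ≤ ∫ x in c..b, M * g2 x := by
          apply intervalIntegral.integral_mono_on hcb.le
          · exact (((hψ.mono huIcc2).mul hg2c.continuousOn).abs).intervalIntegrable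
          · exact (continuous_const.mul hg2c).intervalIntegrable _ _
          · intro x hx
            have hg2nn : 0 ≤ g2 x := by
              rw [hg2]
              have : (0:ℝ) ≤ b - x := by linarith [hx.2]
              positivity
            rw [abs_mul, abs_of_nonneg hg2nn]
            exact mul_le_mul_of_nonneg_right (hM x (hsub2 hx)) hg2nn
      _ = M * ((c - a) * (b - c) / (b - a)) := by
          rw [intervalIntegral.integral_const_mul, hint2]
  calc |I| ≤ |∫ x in c..b, ψ x * g2 x| + |∫ x in a..c, ψ x * g1 x| := by
        rw [hI2]; exact abs_sub _ _
    _ ≤ M * ((c - a) * (b - c) / (b - a)) + M * ((c - a) * (b - c) / (b - a)) :=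
        add_le_add hbound2 hbound1
    _ = 2 * M * ((c - a) * (b - c) / (b - a)) := by ring
end

section
/- For all real numbers a < b, the infimal hyperbolic distance D from i to the geodesic γ_{a,b} satisfies | D − |log((b−a)/2)| | ≤ |a + b|. -/
open scoped UpperHalfPlane

/-- Auxiliary lower bound on the hyperbolic distance from `i` to a point `z`. -/
lemma aux_dist_I_lower (z : ℍ) (t : ℝ) (ht : 0 < t) (him : z.im ≤ t)
    (hd : (t - 1) ^ 2 ≤ dist (Complex.I) (z : ℂ) ^ 2) :
    |Real.log t| ≤ dist UpperHalfPlane.I z := by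
  have him0 : 0 < z.im := z.im_pos
  have h1 : Real.cosh (Real.log t) ≤ Real.cosh (dist UpperHalfPlane.I z) := by
    rw [Real.cosh_log ht, UpperHalfPlane.cosh_dist]
    have hI : ((UpperHalfPlane.I : ℍ) : ℂ) = Complex.I := rfl
    have hIm : (UpperHalfPlane.I : ℍ).im = 1 := rfl
    rw [hI, hIm]
    have hd0 : (0:ℝ) ≤ dist (Complex.I) (z : ℂ) ^ 2 := sq_nonneg _
    have key : (t + t⁻¹) / 2 ≤ 1 + dist (Complex.I) (z : ℂ) ^ 2 / (2 * t) := by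
      have e1 : (t + t⁻¹) / 2 = 1 + (t - 1) ^ 2 / (2 * t) := by
        field_simp
        ring
      rw [e1]
      have e2 : (t - 1) ^ 2 / (2 * t) ≤ dist (Complex.I) (z : ℂ) ^ 2 / (2 * t) := by
        gcongr
      linarith
    refine key.trans ?_
    have : dist (Complex.I) (z : ℂ) ^ 2 / (2 * t) ≤
        dist (Complex.I) (z : ℂ) ^ 2 / (2 * 1 * z.im) := by
      apply div_le_div_of_nonneg_left hd0 (by positivity) (by nlinarith)
    linarith
  have h2 := Real.cosh_le_cosh.mp h1
  rwa [abs_of_nonneg dist_nonneg] at h2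

set_option maxHeartbeats 1000000 in
/-- for `a < b`, the distance `D` from `i` to the geodesic `γ_{a,b}` satisfies
`|D − |log((b−a)/2)|| ≤ |a + b|`. -/
theorem dist_to_geodesic_estimate (a b : ℝ) (hab : a < b) :
    abs (Metric.infDist UpperHalfPlane.I
        {z : ℍ | ‖(z : ℂ) - (((a + b) / 2 : ℝ) : ℂ)‖ = (b - a) / 2} -
      |Real.log ((b - a) / 2)|) ≤ |a + b| := by
  set c : ℝ := (a + b) / 2 with hc
  set r : ℝ := (b - a) / 2 with hrdef
  have hr : 0 < r := by simp [hrdef]; linarith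
  set S : Set ℍ := {z : ℍ | ‖(z : ℂ) - (c : ℂ)‖ = r} with hSdef
  -- the point c + r i is on the geodesic
  have him0 : (0:ℝ) < ((c : ℂ) + (r : ℂ) * Complex.I).im := by
    simp [Complex.add_im, Complex.mul_im, hr]
  set z₀ : ℍ := ⟨(c : ℂ) + (r : ℂ) * Complex.I, him0⟩ with hz₀def
  have hz₀S : z₀ ∈ S := by
    show ‖((c : ℂ) + (r : ℂ) * Complex.I) - (c : ℂ)‖ = r
    rw [add_sub_cancel_left]
    simp [abs_of_pos hr]
  have hSne : S.Nonempty := ⟨z₀, hz₀S⟩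
  set L : ℝ := |Real.log r| with hL
  set D : ℝ := Metric.infDist UpperHalfPlane.I S with hD
  have hI : ((UpperHalfPlane.I : ℍ) : ℂ) = Complex.I := rfl
  have hIm : (UpperHalfPlane.I : ℍ).im = 1 := rfl
  -- Upper bound : D ≤ L + 2|c|
  have hub : D ≤ L + 2 * |c| := by
    have h1 : D ≤ dist UpperHalfPlane.I z₀ := Metric.infDist_le_dist_of_mem hz₀S
    have h2 : dist UpperHalfPlane.I z₀ ≤ L + 2 * |c| := by
      have hz₀im : (z₀ : ℍ).im = r := by
        simp [hz₀def, UpperHalfPlane.im, Complex.add_im, Complex.mul_im]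
      have hdist2 : dist (Complex.I) ((z₀ : ℍ) : ℂ) ^ 2 = c ^ 2 + (1 - r) ^ 2 := by
        rw [Complex.dist_eq, Complex.sq_norm, Complex.normSq_apply]
        simp [hz₀def, Complex.sub_re, Complex.sub_im, Complex.add_re, Complex.add_im,
          Complex.mul_re, Complex.mul_im]
        ring
      have hcosh : Real.cosh (dist UpperHalfPlane.I z₀) =
          1 + (c ^ 2 + (1 - r) ^ 2) / (2 * r) := by
        rw [UpperHalfPlane.cosh_dist, hI, hIm, hdist2, hz₀im]
        ring_nf
      have hchain : Real.cosh (dist UpperHalfPlane.I z₀) ≤ Real.cosh (L + 2 * |c|) := by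
        rw [hcosh, Real.cosh_add]
        have hsinh1 : 0 ≤ Real.sinh L := by
          rw [Real.sinh_nonneg_iff]; exact abs_nonneg _
        have hsinh2 : 0 ≤ Real.sinh (2 * |c|) := by
          rw [Real.sinh_nonneg_iff]; positivity
        have hcoshL : Real.cosh L = (r + r⁻¹) / 2 := by
          rw [hL, Real.cosh_abs, Real.cosh_log hr]
        have hcosh2c : 1 + 2 * c ^ 2 ≤ Real.cosh (2 * |c|) := by
          rw [Real.cosh_two_mul, Real.cosh_sq]
          have : |c| ≤ Real.sinh |c| := Real.self_le_sinh_iff.mpr (abs_nonneg _)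
          nlinarith [abs_nonneg c, sq_abs c]
        have hmain : 1 + (c ^ 2 + (1 - r) ^ 2) / (2 * r) ≤
            (r + r⁻¹) / 2 * (1 + 2 * c ^ 2) := by
          have e : (r + r⁻¹) / 2 * (1 + 2 * c ^ 2) - (1 + (c ^ 2 + (1 - r) ^ 2) / (2 * r)) =
              c ^ 2 * (2 * r ^ 2 + 1) / (2 * r) := by
            field_simp
            ring
          have epos : (0:ℝ) ≤ c ^ 2 * (2 * r ^ 2 + 1) / (2 * r) := by positivity
          linarith
        calc 1 + (c ^ 2 + (1 - r) ^ 2) / (2 * r) ≤ (r + r⁻¹) / 2 * (1 + 2 * c ^ 2) := hmain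
          _ ≤ Real.cosh L * Real.cosh (2 * |c|) := by
              rw [hcoshL]
              have h1c : (0:ℝ) < (r + r⁻¹) / 2 := by positivity
              nlinarith
          _ ≤ Real.cosh L * Real.cosh (2 * |c|) + Real.sinh L * Real.sinh (2 * |c|) := by
              nlinarith
      have := Real.cosh_le_cosh.mp hchain
      rw [abs_of_nonneg dist_nonneg, abs_of_nonneg (by positivity)] at this
      exact this
    linarith
  -- Lower bound : L - 2|c| ≤ D
  have hlb : L - 2 * |c| ≤ D := by
    by_cases htriv : L ≤ 2 * |c|
    · have := Metric.infDist_nonneg (x := UpperHalfPlane.I) (s := S)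
      linarith
    push_neg at htriv
    -- for every point of S the distance is at least L - 2|c|
    have hpt : ∀ z ∈ S, L - 2 * |c| ≤ dist UpperHalfPlane.I z := by
      intro z hz
      have hzS : ‖(z : ℂ) - (c : ℂ)‖ = r := hz
      have him0' : 0 < z.im := z.im_pos
      rcases le_or_gt r 1 with hr1 | hr1
      · -- small radius: use the imaginary part
        have himr : z.im ≤ r := by
          have h1 : |((z : ℂ) - (c : ℂ)).im| ≤ ‖(z : ℂ) - (c : ℂ)‖ :=
            Complex.abs_im_le_norm _
          have h2 : ((z : ℂ) - (c : ℂ)).im = z.im := by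
            simp [Complex.sub_im]
          rw [h2, hzS] at h1
          exact (le_abs_self _).trans h1
        have hd : (z.im - 1) ^ 2 ≤ dist (Complex.I) (z : ℂ) ^ 2 := by
          rw [Complex.dist_eq, Complex.sq_norm, Complex.normSq_apply]
          have him' : (Complex.I - (z : ℂ)).im = 1 - z.im := by simp [Complex.sub_im]
          rw [him']
          nlinarith [mul_self_nonneg (Complex.I - (z : ℂ)).re]
        have hkey := aux_dist_I_lower z z.im him0' le_rfl hd
        have hmono : Real.log z.im ≤ Real.log r := Real.log_le_log him0' himr
        have hLr : L = -Real.log r := by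
          rw [hL, abs_of_nonpos (Real.log_nonpos (le_of_lt hr) hr1)]
        have h2c : 0 ≤ 2 * |c| := by positivity
        calc L - 2 * |c| ≤ -Real.log r := by rw [hLr]; linarith
          _ ≤ -Real.log z.im := by linarith
          _ ≤ |Real.log z.im| := neg_le_abs _
          _ ≤ dist UpperHalfPlane.I z := hkey
      · -- big radius: use the absolute value
        set t : ℝ := ‖(z : ℂ)‖ with htdef
        have habs : r - |c| ≤ t := by
          have h1 : ‖(z : ℂ) - (c : ℂ)‖ ≤
              ‖(z : ℂ)‖ + ‖(c : ℂ)‖ := by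
            have := norm_add_le ((z : ℂ)) (-(c : ℂ))
            simpa [sub_eq_add_neg] using this
          rw [hzS, Complex.norm_real, Real.norm_eq_abs] at h1
          linarith
        set E : ℝ := Real.exp (2 * |c|) with hEdef
        have hE1 : 1 + 2 * |c| ≤ E := by
          rw [hEdef]
          have := Real.add_one_le_exp (2 * |c|)
          linarith
        have hrE : E < r := by
          have : Real.exp (2 * |c|) < Real.exp (Real.log r) := by
            apply Real.exp_lt_exp.mpr
            rw [hL, abs_of_nonneg (Real.log_nonneg (le_of_lt hr1))] at htriv
            linarith
          rw [Real.exp_log hr] at this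
          exact this
        have hE0 : 0 < E := Real.exp_pos _
        have hrEbound : r / E ≤ r - |c| := by
          rw [div_le_iff₀ hE0]
          have k1 : E * (2 * |c|) ≤ r * (E - 1) := by
            have k2 : E * (2 * |c|) ≤ E * (E - 1) := by nlinarith [abs_nonneg c]
            have k3 : E * (E - 1) ≤ r * (E - 1) := by nlinarith [abs_nonneg c]
            linarith
          nlinarith [abs_nonneg c]
        have ht1 : 1 < t := by
          have : (1 : ℝ) < r - |c| := by linarith [abs_nonneg c]
          linarith
        have ht0 : 0 < t := by linarith
        have him : z.im ≤ t := by
          have h1 : |(z : ℂ).im| ≤ ‖(z : ℂ)‖ := Complex.abs_im_le_norm _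
          exact (le_abs_self _).trans h1
        have hd : (t - 1) ^ 2 ≤ dist (Complex.I) (z : ℂ) ^ 2 := by
          have h1 : t - 1 ≤ dist (Complex.I) (z : ℂ) := by
            rw [Complex.dist_eq]
            have h2 : ‖(z : ℂ)‖ - ‖(Complex.I)‖ ≤
                ‖(z : ℂ) - Complex.I‖ := by
              have := norm_add_le ((z : ℂ) - Complex.I) (Complex.I)
              rw [sub_add_cancel] at this
              linarith
            rw [Complex.norm_I] at h2
            rwa [norm_sub_rev]
          have h0 : (0:ℝ) ≤ t - 1 := by linarith
          nlinarith [dist_nonneg (x := Complex.I) (y := (z : ℂ))]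
        have hkey := aux_dist_I_lower z t ht0 him hd
        have hlogt : Real.log r - 2 * |c| ≤ Real.log t := by
          have h1 : Real.log (r / E) ≤ Real.log t := by
            apply Real.log_le_log (by positivity)
            linarith
          rw [Real.log_div (ne_of_gt hr) (ne_of_gt hE0), hEdef, Real.log_exp] at h1
          exact h1
        have hLpos : L = Real.log r := by
          rw [hL, abs_of_nonneg (Real.log_nonneg (le_of_lt hr1))]
        calc L - 2 * |c| = Real.log r - 2 * |c| := by rw [hLpos]
          _ ≤ Real.log t := hlogt
          _ ≤ |Real.log t| := le_abs_self _
          _ ≤ dist UpperHalfPlane.I z := hkey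
    rw [hD, Metric.infDist_eq_iInf]
    have : Nonempty S := hSne.to_subtype
    exact le_ciInf fun y => hpt y y.2
  -- combine
  have habc : |a + b| = 2 * |c| := by
    rw [hc, abs_div]
    norm_num
    linarith [abs_nonneg (a+b)]
  rw [habc, abs_le]
  constructor <;> [linarith; linarith]
end

section
/- There exists a constant C ≥ 1 such that for all real numbers a < b with a·b ≥ −1 (i.e. the point i is not separated from ∞ by the geodesic γ_{a,b}), one has C^{-1}·e^{−D} ≤ arctan b − arctan a ≤ C·e^{−D}, where D is the infimal hyperbolic distance from i to γ_{a,b}. -/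
open scoped UpperHalfPlane

private lemma abs_eq_iff_sq (w : ℂ) {r : ℝ} (hr : 0 ≤ r) :
    ‖w‖ = r ↔ w.re ^ 2 + w.im ^ 2 = r ^ 2 := by
  constructor
  · intro h
    have h2 : ‖w‖ ^ 2 = r ^ 2 := by rw [h]
    rw [Complex.sq_norm, Complex.normSq_apply] at h2
    nlinarith [h2]
  · intro h
    rw [Complex.norm_def, Complex.normSq_apply,
      show w.re * w.re + w.im * w.im = r ^ 2 by nlinarith [h], Real.sqrt_sq hr]

private lemma cosh_dist_I (z : ℍ) :
    Real.cosh (dist UpperHalfPlane.I z) = (z.re ^ 2 + z.im ^ 2 + 1) / (2 * z.im) := by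
  rw [UpperHalfPlane.cosh_dist]
  have h1 : dist ((UpperHalfPlane.I : ℍ) : ℂ) (z : ℂ) ^ 2 = z.re ^ 2 + (1 - z.im) ^ 2 := by
    rw [Complex.dist_eq, Complex.sq_norm, Complex.normSq_apply]
    simp [Complex.sub_re, Complex.sub_im, UpperHalfPlane.coe_re, UpperHalfPlane.coe_im,
      UpperHalfPlane.I]
    ring
  rw [h1, UpperHalfPlane.I_im]
  have hz := z.im_pos
  field_simp
  ring

private lemma key_ineq (a b x y sv : ℝ) (hab : a < b) (hy : 0 < y)
    (hs2 : sv ^ 2 = (1 + a ^ 2) * (1 + b ^ 2)) (hs0 : 0 ≤ sv)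
    (hcon : (x - (a + b) / 2) ^ 2 + y ^ 2 = ((b - a) / 2) ^ 2) :
    sv * (2 * y) ≤ (x ^ 2 + y ^ 2 + 1) * (b - a) := by
  have hba : 0 < b - a := by linarith
  have hBpos : (0:ℝ) < (b - a) * (a ^ 2 + b ^ 2 + 2) / 4 := by positivity
  have hW : ((b - a) * (a ^ 2 + b ^ 2 + 2) / 4) ^ 2
        - (sv * y - (b - a) * (a + b) / 2 * (x - (a + b) / 2)) ^ 2
      = ((b - a) * (a + b) / 2 * y + sv * (x - (a + b) / 2)) ^ 2 := by
    linear_combination (-(sv ^ 2 + (a + b) ^ 2 * (b - a) ^ 2 / 4)) * hcon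
      + (-((b - a) ^ 2 / 4)) * hs2
  have hA2B2 : (sv * y - (b - a) * (a + b) / 2 * (x - (a + b) / 2)) ^ 2
      ≤ ((b - a) * (a ^ 2 + b ^ 2 + 2) / 4) ^ 2 := by
    nlinarith [hW, sq_nonneg ((b - a) * (a + b) / 2 * y + sv * (x - (a + b) / 2))]
  have habs : |sv * y - (b - a) * (a + b) / 2 * (x - (a + b) / 2)|
      ≤ |(b - a) * (a ^ 2 + b ^ 2 + 2) / 4| := by
    rw [← Real.sqrt_sq_eq_abs, ← Real.sqrt_sq_eq_abs]
    exact Real.sqrt_le_sqrt hA2B2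
  have hAB : sv * y - (b - a) * (a + b) / 2 * (x - (a + b) / 2)
      ≤ (b - a) * (a ^ 2 + b ^ 2 + 2) / 4 := by
    have h1 := le_abs_self (sv * y - (b - a) * (a + b) / 2 * (x - (a + b) / 2))
    rw [abs_of_pos hBpos] at habs
    linarith
  have hxy : x ^ 2 + y ^ 2 = ((b - a) / 2) ^ 2 - ((a + b) / 2) ^ 2 + (a + b) * x := by
    linear_combination hcon
  rw [hxy]
  nlinarith [hAB]

set_option maxHeartbeats 1000000 in
private lemma infDist_formula (a b : ℝ) (hab : a < b) (h1 : a * b ≥ -1) :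
    Metric.infDist UpperHalfPlane.I
        {z : ℍ | ‖(z : ℂ) - (((a + b) / 2 : ℝ) : ℂ)‖ = (b - a) / 2}
      = Real.arsinh ((1 + a * b) / (b - a)) := by
  have hba : 0 < b - a := by linarith
  have hQ : 0 ≤ 1 + a * b := by linarith
  set sv : ℝ := Real.sqrt ((1 + a ^ 2) * (1 + b ^ 2)) with hsv
  have hs2 : sv ^ 2 = (1 + a ^ 2) * (1 + b ^ 2) := Real.sq_sqrt (by positivity)
  have hs0 : 0 < sv := Real.sqrt_pos.mpr (by positivity)
  set D : ℝ := Real.arsinh ((1 + a * b) / (b - a)) with hD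
  have hD0 : 0 ≤ D := Real.arsinh_nonneg_iff.mpr (div_nonneg hQ hba.le)
  have hsqrt : Real.sqrt (1 + ((1 + a * b) / (b - a)) ^ 2) = sv / (b - a) := by
    rw [show 1 + ((1 + a * b) / (b - a)) ^ 2 = ((1 + a ^ 2) * (1 + b ^ 2)) / (b - a) ^ 2 by
      field_simp; ring]
    rw [Real.sqrt_div (by positivity), Real.sqrt_sq hba.le]
  have hcoshD : Real.cosh D = sv / (b - a) := by
    rw [hD, Real.cosh_arsinh, hsqrt]
  set S : Set ℍ := {z : ℍ | ‖(z : ℂ) - (((a + b) / 2 : ℝ) : ℂ)‖ = (b - a) / 2}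
    with hS
  -- membership characterization
  have hmem : ∀ z : ℍ, z ∈ S ↔ (z.re - (a + b) / 2) ^ 2 + z.im ^ 2 = ((b - a) / 2) ^ 2 := by
    intro z
    rw [hS, Set.mem_setOf_eq, abs_eq_iff_sq _ (by positivity)]
    simp [Complex.sub_re, Complex.sub_im, UpperHalfPlane.coe_re, UpperHalfPlane.coe_im]
  -- the minimizing point
  have hN : (0:ℝ) < a ^ 2 + b ^ 2 + 2 := by positivity
  have hy0 : (0:ℝ) < (b - a) * sv / (a ^ 2 + b ^ 2 + 2) := by positivity
  set z₀ : ℍ := ⟨⟨(a + b) * (1 + a * b) / (a ^ 2 + b ^ 2 + 2),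
      (b - a) * sv / (a ^ 2 + b ^ 2 + 2)⟩, hy0⟩ with hz₀
  have hz₀re : z₀.re = (a + b) * (1 + a * b) / (a ^ 2 + b ^ 2 + 2) := rfl
  have hz₀im : z₀.im = (b - a) * sv / (a ^ 2 + b ^ 2 + 2) := rfl
  have hz₀mem : z₀ ∈ S := by
    rw [hmem, hz₀re, hz₀im]
    have hY2 : ((b - a) * sv / (a ^ 2 + b ^ 2 + 2)) ^ 2
        = (b - a) ^ 2 * ((1 + a ^ 2) * (1 + b ^ 2)) / (a ^ 2 + b ^ 2 + 2) ^ 2 := by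
      rw [← hs2, div_pow, mul_pow]
    rw [hY2]
    field_simp [hN.ne']
    ring
  have hcosh₀ : Real.cosh (dist UpperHalfPlane.I z₀) = sv / (b - a) := by
    rw [cosh_dist_I, hz₀re, hz₀im]
    rw [div_eq_div_iff (by positivity) hba.ne']
    have hexp : sv * (2 * ((b - a) * sv / (a ^ 2 + b ^ 2 + 2)))
        = 2 * (b - a) * ((1 + a ^ 2) * (1 + b ^ 2)) / (a ^ 2 + b ^ 2 + 2) := by
      rw [← hs2]; ring
    rw [show (((a + b) * (1 + a * b) / (a ^ 2 + b ^ 2 + 2)) ^ 2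
        + ((b - a) * sv / (a ^ 2 + b ^ 2 + 2)) ^ 2 + 1) * (b - a)
        = (((a + b) * (1 + a * b) / (a ^ 2 + b ^ 2 + 2)) ^ 2
        + (b - a) ^ 2 * ((1 + a ^ 2) * (1 + b ^ 2)) / (a ^ 2 + b ^ 2 + 2) ^ 2 + 1) * (b - a) by
      rw [← hs2]; simp only [div_pow, mul_pow], hexp]
    field_simp [hN.ne']
    ring
  have hdist₀ : dist UpperHalfPlane.I z₀ = D := by
    have heq : Real.cosh (dist UpperHalfPlane.I z₀) = Real.cosh D := by
      rw [hcosh₀, hcoshD]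
    have l1 := Real.cosh_le_cosh.1 heq.le
    have l2 := Real.cosh_le_cosh.1 heq.ge
    rw [abs_of_nonneg dist_nonneg, abs_of_nonneg hD0] at l1 l2
    linarith
  have hlower : ∀ z ∈ S, D ≤ dist UpperHalfPlane.I z := by
    intro z hz
    have hz' := (hmem z).1 hz
    have hcosh_le : Real.cosh D ≤ Real.cosh (dist UpperHalfPlane.I z) := by
      rw [hcoshD, cosh_dist_I]
      rw [div_le_div_iff₀ hba (by have := z.im_pos; positivity)]
      calc sv * (2 * z.im) = sv * (2 * z.im) := rfl
        _ ≤ (z.re ^ 2 + z.im ^ 2 + 1) * (b - a) :=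
            key_ineq a b z.re z.im sv hab z.im_pos hs2 hs0.le hz'
    have l1 := Real.cosh_le_cosh.1 hcosh_le
    rwa [abs_of_nonneg hD0, abs_of_nonneg dist_nonneg] at l1
  refine le_antisymm ?_ ?_
  · calc Metric.infDist UpperHalfPlane.I S ≤ dist UpperHalfPlane.I z₀ :=
        Metric.infDist_le_dist_of_mem hz₀mem
      _ = D := hdist₀
  · by_contra hcon
    push_neg at hcon
    obtain ⟨z, hzS, hlt⟩ := (Metric.infDist_lt_iff ⟨z₀, hz₀mem⟩).1 hcon
    exact absurd hlt (not_lt.2 (hlower z hzS))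

set_option maxHeartbeats 1000000 in
/-- there is a constant `C ≥ 1` such that for all `a < b` with `a·b ≥ −1`, the
visual length `arctan b − arctan a` is comparable to `e^{−D}`, where `D` is the hyperbolic
distance from `i` to the geodesic `γ_{a,b}`. -/
theorem visual_angle_comparable_exp_neg_dist :
    ∃ C : ℝ, 1 ≤ C ∧ ∀ a b : ℝ, a < b → a * b ≥ -1 →
      C⁻¹ * Real.exp (-(Metric.infDist UpperHalfPlane.I
          {z : ℍ | ‖(z : ℂ) - (((a + b) / 2 : ℝ) : ℂ)‖ = (b - a) / 2})) ≤
        Real.arctan b - Real.arctan a ∧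
      Real.arctan b - Real.arctan a ≤
        C * Real.exp (-(Metric.infDist UpperHalfPlane.I
          {z : ℍ | ‖(z : ℂ) - (((a + b) / 2 : ℝ) : ℂ)‖ = (b - a) / 2})) := by
  refine ⟨2, by norm_num, fun a b hab h1 => ?_⟩
  have hba : 0 < b - a := by linarith
  have hQ : 0 ≤ 1 + a * b := by linarith
  set sv : ℝ := Real.sqrt ((1 + a ^ 2) * (1 + b ^ 2)) with hsv
  have hs2 : sv ^ 2 = (1 + a ^ 2) * (1 + b ^ 2) := Real.sq_sqrt (by positivity)
  have hs0 : 0 < sv := Real.sqrt_pos.mpr (by positivity)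
  have hsba : b - a ≤ sv := by nlinarith [hs2, hs0, sq_nonneg (1 + a * b)]
  have hQs : 0 < 1 + a * b + sv := by linarith
  rw [infDist_formula a b hab h1]
  have hsqrt : Real.sqrt (1 + ((1 + a * b) / (b - a)) ^ 2) = sv / (b - a) := by
    rw [show 1 + ((1 + a * b) / (b - a)) ^ 2 = ((1 + a ^ 2) * (1 + b ^ 2)) / (b - a) ^ 2 by
      field_simp; ring]
    rw [Real.sqrt_div (by positivity), Real.sqrt_sq hba.le]
  have hexpD : Real.exp (-(Real.arsinh ((1 + a * b) / (b - a))))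
      = (b - a) / (1 + a * b + sv) := by
    rw [Real.exp_neg, Real.exp_arsinh, hsqrt, ← add_div, inv_div]
  rw [hexpD]
  set E : ℝ := (b - a) / (1 + a * b + sv) with hE
  have hE0 : 0 < E := div_pos hba hQs
  have hE1 : E ≤ 1 := by rw [hE, div_le_one hQs]; linarith
  -- the visual angle equals 2 * arctan E
  have hth : Real.arctan b - Real.arctan a = 2 * Real.arctan E := by
    rcases eq_or_lt_of_le hQ with hQ0 | hQpos
    · -- a * b = -1
      have hsv_eq : sv = b - a := by nlinarith [hs2, hs0]
      have hE_eq : E = 1 := by rw [hE, hsv_eq, ← hQ0]; field_simp; ring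
      have ha_neg : a < 0 := by nlinarith
      have hb_eq : b = -a⁻¹ := by
        field_simp [ha_neg.ne]
        linear_combination -hQ0
      rw [hE_eq, Real.arctan_one, hb_eq, show -a⁻¹ = (-a)⁻¹ by ring,
        Real.arctan_inv_of_pos (by linarith), Real.arctan_neg]
      ring
    · have hElt1 : E < 1 := by
        rw [hE, div_lt_one hQs]
        nlinarith [hs2, hs0]
      have harg : Real.arctan b - Real.arctan a = Real.arctan ((b - a) / (1 + a * b)) := by
        have hmul : b * (-a) < 1 := by nlinarith
        have := Real.arctan_add hmul
        rw [Real.arctan_neg] at this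
        rw [show Real.arctan b - Real.arctan a = Real.arctan b + -Real.arctan a by ring, this,
          show (b + -a) / (1 - b * -a) = (b - a) / (1 + a * b) by rw [show 1 - b * -a = 1 + a * b by ring, show b + -a = b - a by ring]]
      have h2arc : 2 * Real.arctan E = Real.arctan (2 * E / (1 - E ^ 2)) :=
        Real.two_mul_arctan (by linarith) hElt1
      have hargeq : 2 * E / (1 - E ^ 2) = (b - a) / (1 + a * b) := by
        have h1E : 1 - E ^ 2 = 2 * (1 + a * b) / (1 + a * b + sv) := by
          rw [hE]
          have hne : 1 + a * b + sv ≠ 0 := hQs.ne'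
          rw [div_pow, eq_div_iff hne, sub_mul, div_mul_eq_mul_div, sq (1 + a * b + sv), ← div_div, mul_div_assoc, div_self hne, mul_one, sub_eq_iff_eq_add, ← sub_eq_iff_eq_add', eq_div_iff hne]
          linear_combination hs2
        rw [h1E, hE]
        rw [div_eq_div_iff (by positivity) hQpos.ne']
        field_simp
      rw [harg, h2arc, hargeq]
  rw [hth]
  clear_value E sv
  have hu0 : 0 < Real.arctan E := by
    rw [show (0:ℝ) = Real.arctan 0 by simp]
    exact Real.arctan_strictMono hE0
  have hu_le : Real.arctan E ≤ Real.pi / 4 := by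
    rw [← Real.arctan_one]
    exact Real.arctan_strictMono.monotone hE1
  constructor
  · -- 2⁻¹ * E ≤ 2 * arctan E ; from E ≤ 2 * arctan E
    have hsin : Real.sin (Real.arctan E) ≤ Real.arctan E := Real.sin_le hu0.le
    have hcos : Real.sqrt 2 / 2 ≤ Real.cos (Real.arctan E) := by
      rw [← Real.cos_pi_div_four]
      apply Real.cos_le_cos_of_nonneg_of_le_pi hu0.le ?_ hu_le
      linarith [Real.pi_le_four]
    have hcospos : 0 < Real.cos (Real.arctan E) := Real.cos_arctan_pos E
    have hEeq : E = Real.sin (Real.arctan E) / Real.cos (Real.arctan E) := by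
      rw [← Real.tan_eq_sin_div_cos, Real.tan_arctan]
    have hsqrt2 : (1:ℝ) ≤ Real.sqrt 2 := by
      nlinarith [Real.sq_sqrt (by norm_num : (0:ℝ) ≤ 2), Real.sqrt_nonneg 2]
    have h2cos : 1 ≤ 2 * Real.cos (Real.arctan E) := by nlinarith [hcos, hsqrt2]
    have hkey : Real.sin (Real.arctan E)
        ≤ 2 * Real.arctan E * Real.cos (Real.arctan E) := by
      nlinarith [hsin, h2cos, hu0]
    have hEle : E ≤ 2 * Real.arctan E := by
      nth_rewrite 1 [hEeq]
      rw [div_le_iff₀ hcospos]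
      exact hkey
    linarith [hEle, hE0]
  · -- 2 * arctan E ≤ 2 * E
    have : Real.arctan E ≤ E := by
      have h1 := Real.lt_tan hu0 ((Real.arctan_lt_pi_div_two E))
      rw [Real.tan_arctan] at h1
      linarith
    linarith
end

section
/- There exists a universal constant C such that for every countable family of pairwise disjoint open intervals (a_j, b_j) ⊂ ℝ with a_j·b_j ≥ −1 for every j, one has ∑_j exp(−D_j) ≤ C, where D_j is the infimal hyperbolic distance from i to the geodesic γ_{a_j, b_j}. -/
open scoped UpperHalfPlane

private lemma pt_bound (a b : ℝ) (hab : a < b) (z : ℍ)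
    (hz : ‖(z : ℂ) - (((a + b) / 2 : ℝ) : ℂ)‖ = (b - a) / 2) :
    Real.exp (-(dist UpperHalfPlane.I z)) ≤ Real.arctan b - Real.arctan a := by
  obtain ⟨x, y, hzx, hzy, hy⟩ :
      ∃ x y : ℝ, (z : ℂ).re = x ∧ (z : ℂ).im = y ∧ 0 < y := ⟨_, _, rfl, rfl, z.2⟩
  -- circle equation
  have hcirc : (x - (a + b) / 2) ^ 2 + y ^ 2 = ((b - a) / 2) ^ 2 := by
    have h2 : (‖(z : ℂ) - (((a + b) / 2 : ℝ) : ℂ)‖) ^ 2 = ((b - a) / 2) ^ 2 := by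
      rw [hz]
    rw [Complex.sq_norm, Complex.normSq_apply] at h2
    simp only [Complex.sub_re, Complex.sub_im, Complex.ofReal_re, Complex.ofReal_im,
      sub_zero] at h2
    rw [hzx, hzy] at h2
    linear_combination h2
  -- distance formula
  have hIim : (Complex.I).im = 1 := Complex.I_im
  have hdist : dist UpperHalfPlane.I z
      = 2 * Real.arsinh (dist (Complex.I) (z : ℂ) / (2 * Real.sqrt y)) := by
    rw [UpperHalfPlane.dist_eq]
    rw [show ((UpperHalfPlane.I : ℍ) : ℂ) = Complex.I from rfl]
    rw [UpperHalfPlane.I_im]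
    rw [show (UpperHalfPlane.im z) = y from by rw [← UpperHalfPlane.coe_im, hzy], one_mul]
  set t : ℝ := dist (Complex.I) (z : ℂ) / (2 * Real.sqrt y) with ht
  have ht0 : 0 ≤ t := div_nonneg dist_nonneg (by positivity)
  -- exp(-dist) ≤ 1/(1+2t²)
  have hstep1 : Real.exp (-(dist UpperHalfPlane.I z)) ≤ 1 / (1 + 2 * t ^ 2) := by
    rw [hdist]
    set s : ℝ := Real.arsinh t with hsdef
    have hE : Real.exp s = t + Real.sqrt (1 + t ^ 2) := Real.exp_arsinh t
    have hsq : Real.sqrt (1 + t ^ 2) ^ 2 = 1 + t ^ 2 := Real.sq_sqrt (by positivity)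
    have hs0 : t ≤ Real.sqrt (1 + t ^ 2) := by
      nlinarith [Real.sqrt_nonneg (1 + t ^ 2)]
    have hE2 : 1 + 2 * t ^ 2 ≤ Real.exp s ^ 2 := by
      rw [hE]; nlinarith [Real.sqrt_nonneg (1 + t ^ 2)]
    have hpos : (0:ℝ) < 1 + 2 * t ^ 2 := by positivity
    have hprod : Real.exp (-(2 * s)) * Real.exp s ^ 2 = 1 := by
      rw [pow_two, ← Real.exp_add, ← Real.exp_add]
      rw [show -(2 * s) + (s + s) = 0 by ring, Real.exp_zero]
    have hEpos : (0:ℝ) < Real.exp s ^ 2 := by positivity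
    have heq : Real.exp (-(2 * s)) = 1 / Real.exp s ^ 2 := by
      rw [eq_div_iff hEpos.ne']; exact hprod
    rw [heq]
    exact one_div_le_one_div_of_le hpos hE2
  -- compute t²
  have ht2 : 1 + 2 * t ^ 2 = (1 + x ^ 2 + y ^ 2) / (2 * y) := by
    have hd : dist (Complex.I) (z : ℂ) ^ 2 = x ^ 2 + (1 - y) ^ 2 := by
      rw [Complex.dist_eq, Complex.sq_norm, Complex.normSq_apply]
      simp only [Complex.sub_re, Complex.sub_im, Complex.I_re, Complex.I_im]
      rw [hzx, hzy]; ring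
    have hsy : Real.sqrt y ^ 2 = y := Real.sq_sqrt hy.le
    rw [ht, div_pow, hd, mul_pow, hsy]
    field_simp
    ring
  have hbound : 1 / (1 + 2 * t ^ 2) = 2 * y / (1 + x ^ 2 + y ^ 2) := by
    rw [ht2, one_div_div]
  -- key algebraic inequality on the semicircle
  set A : ℝ := Real.sqrt (1 + a ^ 2) with hA
  set B : ℝ := Real.sqrt (1 + b ^ 2) with hB
  have hA2 : A ^ 2 = 1 + a ^ 2 := Real.sq_sqrt (by positivity)
  have hB2 : B ^ 2 = 1 + b ^ 2 := Real.sq_sqrt (by positivity)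
  have hApos : 0 < A := Real.sqrt_pos.2 (by positivity)
  have hBpos : 0 < B := Real.sqrt_pos.2 (by positivity)
  have hden : (0:ℝ) < 1 + x ^ 2 + y ^ 2 := by positivity
  have hkey : (b - a) ^ 2 * (1 + x ^ 2 + y ^ 2) ^ 2 - 4 * y ^ 2 * (1 + a ^ 2) * (1 + b ^ 2)
      = 4 * (2 * ((b - a) / 2) ^ 2 * ((a + b) / 2)
          + (x - (a + b) / 2) * (1 + ((b - a) / 2) ^ 2 + ((a + b) / 2) ^ 2)) ^ 2 := by
    linear_combination ((-4 : ℝ) - 2*b^2 + b^2*y^2 + b^2*x^2 + b^3*x - 4*a*b - 2*a*b*y^2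
      - 2*a*b*x^2 - a*b^2*x - a*b^3 - 2*a^2 + a^2*y^2 + a^2*x^2 - a^2*b*x - 2*a^2*b^2
      + a^3*x - a^3*b) * hcirc
  have hsq2 : 4 * y ^ 2 * (1 + a ^ 2) * (1 + b ^ 2)
      ≤ (b - a) ^ 2 * (1 + x ^ 2 + y ^ 2) ^ 2 := by
    linarith [sq_nonneg (2 * ((b - a) / 2) ^ 2 * ((a + b) / 2)
      + (x - (a + b) / 2) * (1 + ((b - a) / 2) ^ 2 + ((a + b) / 2) ^ 2)), hkey]
  have hstep2 : 2 * y / (1 + x ^ 2 + y ^ 2) ≤ (b - a) / (A * B) := by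
    rw [div_le_div_iff₀ hden (by positivity)]
    have h1 : (2 * y * (A * B)) ^ 2 ≤ ((b - a) * (1 + x ^ 2 + y ^ 2)) ^ 2 := by
      have he : (2 * y * (A * B)) ^ 2 = 4 * y ^ 2 * (1 + a ^ 2) * (1 + b ^ 2) := by
        rw [mul_pow, mul_pow, mul_pow, hA2, hB2]; ring
      rw [he]
      calc 4 * y ^ 2 * (1 + a ^ 2) * (1 + b ^ 2)
          ≤ (b - a) ^ 2 * (1 + x ^ 2 + y ^ 2) ^ 2 := hsq2
        _ = ((b - a) * (1 + x ^ 2 + y ^ 2)) ^ 2 := by ring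
    exact le_of_pow_le_pow_left₀ (by norm_num)
      (mul_nonneg (by linarith) (by positivity)) h1
  -- (b-a)/(A·B) = sin(arctan b - arctan a) ≤ arctan b - arctan a
  have hsin : Real.sin (Real.arctan b - Real.arctan a) = (b - a) / (A * B) := by
    rw [Real.sin_sub, Real.sin_arctan, Real.cos_arctan, Real.sin_arctan, Real.cos_arctan,
      ← hA, ← hB]
    simp only [div_mul_div_comm, mul_one, one_mul]
    rw [div_sub_div_same, mul_comm B A]
  have hmono : Real.arctan a < Real.arctan b := Real.arctan_strictMono hab
  have hstep3 : (b - a) / (A * B) ≤ Real.arctan b - Real.arctan a := by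
    rw [← hsin]
    exact Real.sin_le (by linarith)
  calc Real.exp (-(dist UpperHalfPlane.I z)) ≤ 1 / (1 + 2 * t ^ 2) := hstep1
    _ = 2 * y / (1 + x ^ 2 + y ^ 2) := hbound
    _ ≤ (b - a) / (A * B) := hstep2
    _ ≤ Real.arctan b - Real.arctan a := hstep3

private lemma infDist_bound (a b : ℝ) (hab : a < b) :
    Real.exp (-(Metric.infDist UpperHalfPlane.I
        {z : ℍ | ‖(z : ℂ) - (((a + b) / 2 : ℝ) : ℂ)‖ = (b - a) / 2}))
      ≤ Real.arctan b - Real.arctan a := by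
  set S := {z : ℍ | ‖(z : ℂ) - (((a + b) / 2 : ℝ) : ℂ)‖ = (b - a) / 2} with hS
  have hr : (0:ℝ) < (b - a) / 2 := by linarith
  have hwim : ((((a + b) / 2 : ℝ) : ℂ) + (((b - a) / 2 : ℝ) : ℂ) * Complex.I).im
      = (b - a) / 2 := by
    simp
  have hw : 0 < ((((a + b) / 2 : ℝ) : ℂ) + (((b - a) / 2 : ℝ) : ℂ) * Complex.I).im := by
    rw [hwim]; exact hr
  have hne : S.Nonempty := by
    refine ⟨UpperHalfPlane.mk ((((a + b) / 2 : ℝ) : ℂ) + (((b - a) / 2 : ℝ) : ℂ) * Complex.I)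
      hw, ?_⟩
    show ‖_‖ = _
    rw [UpperHalfPlane.coe_mk, add_sub_cancel_left, norm_mul, Complex.norm_I,
      Complex.norm_real, Real.norm_eq_abs, mul_one, abs_of_pos hr]
  set Δ := Real.arctan b - Real.arctan a with hΔ
  have hΔpos : 0 < Δ := sub_pos.2 (Real.arctan_strictMono hab)
  by_contra hcon
  push_neg at hcon
  have h1 : Real.log Δ < -(Metric.infDist UpperHalfPlane.I S) := by
    apply Real.exp_lt_exp.mp
    rw [Real.exp_log hΔpos]
    exact hcon
  obtain ⟨z, hzS, hz⟩ := (Metric.infDist_lt_iff hne).1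
    (show Metric.infDist UpperHalfPlane.I S < -Real.log Δ by linarith)
  have hle : Real.exp (-(dist UpperHalfPlane.I z)) ≤ Δ := pt_bound a b hab z hzS
  have hgt : Δ < Real.exp (-(dist UpperHalfPlane.I z)) := by
    rw [← Real.exp_log hΔpos]
    exact Real.exp_lt_exp.2 (by linarith)
  linarith

/-- there is a universal constant `C` such that for every countable family of
pairwise disjoint open intervals `(a_j, b_j)` with `a_j·b_j ≥ −1`, the sum of `exp(−D_j)` is at
most `C`, where `D_j` is the hyperbolic distance from `i` to the geodesic `γ_{a_j,b_j}`. -/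
theorem sum_exp_neg_dist_spanning_family_bounded :
    ∃ C : ℝ, ∀ a b : ℕ → ℝ, (∀ j, a j < b j) → (∀ j, a j * b j ≥ -1) →
      (Pairwise fun i j => Disjoint (Set.Ioo (a i) (b i)) (Set.Ioo (a j) (b j))) →
      Summable (fun j => Real.exp (-(Metric.infDist UpperHalfPlane.I
          {z : ℍ | ‖(z : ℂ) - (((a j + b j) / 2 : ℝ) : ℂ)‖ = (b j - a j) / 2}))) ∧
      (∑' j : ℕ, Real.exp (-(Metric.infDist UpperHalfPlane.I
          {z : ℍ | ‖(z : ℂ) - (((a j + b j) / 2 : ℝ) : ℂ)‖ = (b j - a j) / 2}))) ≤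
        C := by
  refine ⟨Real.pi, ?_⟩
  intro a b hab _ hdisj
  set E : ℕ → ℝ := fun j => Real.exp (-(Metric.infDist UpperHalfPlane.I
      {z : ℍ | ‖(z : ℂ) - (((a j + b j) / 2 : ℝ) : ℂ)‖ = (b j - a j) / 2})) with hE
  set Δ : ℕ → ℝ := fun j => Real.arctan (b j) - Real.arctan (a j) with hΔ
  have hEΔ : ∀ j, E j ≤ Δ j := fun j => infDist_bound (a j) (b j) (hab j)
  have hΔ0 : ∀ j, 0 ≤ Δ j := fun j =>
    (sub_pos.2 (Real.arctan_strictMono (hab j))).le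
  -- the arctan-images intervals
  set f : ℕ → Set ℝ := fun j => Set.Ioo (Real.arctan (a j)) (Real.arctan (b j)) with hf
  have hfdisj : Pairwise (Function.onFun Disjoint f) := by
    intro i j hij
    have h : min (b i) (b j) ≤ max (a i) (a j) := Set.Ioo_disjoint_Ioo.mp (hdisj hij)
    have hmono : Monotone Real.arctan := Real.arctan_strictMono.monotone
    have hgoal : Disjoint (Set.Ioo (Real.arctan (a i)) (Real.arctan (b i)))
        (Set.Ioo (Real.arctan (a j)) (Real.arctan (b j))) := by
      refine Set.Ioo_disjoint_Ioo.mpr ?_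
      calc min (Real.arctan (b i)) (Real.arctan (b j))
          = Real.arctan (min (b i) (b j)) := (hmono.map_min).symm
        _ ≤ Real.arctan (max (a i) (a j)) := hmono h
        _ = max (Real.arctan (a i)) (Real.arctan (a j)) := hmono.map_max
    exact hgoal
  have hfm : ∀ j, MeasurableSet (f j) := fun j => measurableSet_Ioo
  have hvol : ∀ j, MeasureTheory.volume (f j) = ENNReal.ofReal (Δ j) := fun j =>
    Real.volume_Ioo
  have hsub : (⋃ j, f j) ⊆ Set.Ioo (-(Real.pi / 2)) (Real.pi / 2) := by
    refine Set.iUnion_subset fun j => Set.Ioo_subset_Ioo ?_ ?_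
    · exact (Real.arctan_mem_Ioo (a j)).1.le
    · exact (Real.arctan_mem_Ioo (b j)).2.le
  have hsum_le : (∑' j, ENNReal.ofReal (Δ j)) ≤ ENNReal.ofReal Real.pi := by
    calc (∑' j, ENNReal.ofReal (Δ j)) = ∑' j, MeasureTheory.volume (f j) := by
          simp_rw [hvol]
      _ = MeasureTheory.volume (⋃ j, f j) :=
          (MeasureTheory.measure_iUnion hfdisj hfm).symm
      _ ≤ MeasureTheory.volume (Set.Ioo (-(Real.pi / 2)) (Real.pi / 2)) :=
          MeasureTheory.measure_mono hsub
      _ = ENNReal.ofReal Real.pi := by rw [Real.volume_Ioo]; norm_num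
  have hnetop : (∑' j, ENNReal.ofReal (Δ j)) ≠ ⊤ :=
    (lt_of_le_of_lt hsum_le ENNReal.ofReal_lt_top).ne
  have hΔsum : Summable Δ := by
    have h := ENNReal.summable_toReal hnetop
    refine h.congr fun j => ?_
    exact ENNReal.toReal_ofReal (hΔ0 j)
  have hΔtsum : (∑' j, Δ j) ≤ Real.pi := by
    have h1 : (∑' j, ENNReal.ofReal (Δ j)).toReal = ∑' j, Δ j := by
      rw [ENNReal.tsum_toReal_eq (fun j => ENNReal.ofReal_ne_top)]
      exact tsum_congr fun j => ENNReal.toReal_ofReal (hΔ0 j)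
    have h2 := ENNReal.toReal_mono ENNReal.ofReal_ne_top hsum_le
    rw [h1, ENNReal.toReal_ofReal Real.pi_pos.le] at h2
    exact h2
  have hEsum : Summable E :=
    Summable.of_nonneg_of_le (fun j => (Real.exp_pos _).le) hEΔ hΔsum
  refine ⟨hEsum, ?_⟩
  calc (∑' j, E j) ≤ ∑' j, Δ j := Summable.tsum_le_tsum hEΔ hEsum hΔsum
    _ ≤ Real.pi := hΔtsum
end
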